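/- Let L > 0, let 1 ≤ q ≤ m, and let α ∈ ℝ^m with α_i ≥ 0 for all i, α_i ≤ α_{i+1} for i = 1,…,q−1, and α_q ≤ α_j for j = q+1,…,m. Then the vector φ* defined by φ*_i = (1 + √(1 + 4Lα_i)) / (2L) satisfies the constraints φ_i ≤ φ_{i+1} for i = 1,…,q−1 and φ_q ≤ φ_j for j = q+1,…,m, and it minimizes H(φ) = Σ_{i=1}^m (−log φ_i + α_i/φ_i + Lφ_i) over the set of vectors φ ∈ ℝ^m with all entries positive that satisfy these constraints. -/

import Mathlib

/-- The feasible set: positive entries, `φ_i ≤ φ_{i+1}` for `i = 1,…,q−1`,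
and `φ_q ≤ φ_j` for `j = q+1,…,m`. -/
def Feas (q m : ℕ) (φ : ℕ → ℝ) : Prop :=
  (∀ i ∈ Finset.Icc 1 m, 0 < φ i) ∧
  (∀ i, 1 ≤ i → i + 1 ≤ q → φ i ≤ φ (i + 1)) ∧
  (∀ j, q < j → j ≤ m → φ q ≤ φ j)

/-- The objective `H(φ) = Σ_{i=1}^m (−log φ_i + α_i/φ_i + L φ_i)`. -/
noncomputable def Hobj (m : ℕ) (L : ℝ) (α φ : ℕ → ℝ) : ℝ :=
  ∑ i ∈ Finset.Icc 1 m, (-(Real.log (φ i)) + α i / φ i + L * φ i)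

/-- Pointwise minimization: `x* = (1+√(1+4La))/(2L)` minimizes
`-log x + a/x + Lx` over `x > 0`, for `a ≥ 0`, `L > 0`. -/
lemma key_pointwise (L a x : ℝ) (hL : 0 < L) (ha : 0 ≤ a) (hx : 0 < x) :
    -(Real.log ((1 + Real.sqrt (1 + 4 * L * a)) / (2 * L))) +
      a / ((1 + Real.sqrt (1 + 4 * L * a)) / (2 * L)) +
      L * ((1 + Real.sqrt (1 + 4 * L * a)) / (2 * L)) ≤
    -(Real.log x) + a / x + L * x := by
  have hpos : (0:ℝ) ≤ 1 + 4 * L * a := by nlinarith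
  set s := Real.sqrt (1 + 4 * L * a) with hs
  have hs1 : (1:ℝ) ≤ s := by
    have := Real.sqrt_le_sqrt (show (1:ℝ) ≤ 1 + 4*L*a by nlinarith)
    simpa [hs] using this
  have hsq : s ^ 2 = 1 + 4 * L * a := Real.sq_sqrt hpos
  set t := (1 + s) / (2 * L) with htdef
  have ht : 0 < t := div_pos (by linarith) (by linarith)
  have hquad : L * t ^ 2 = t + a := by
    rw [htdef]; field_simp; nlinarith [hsq]
  have hlog : Real.log x - Real.log t ≤ x / t - 1 := by
    have h := Real.log_le_sub_one_of_pos (show 0 < x / t by positivity)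
    rwa [Real.log_div hx.ne' ht.ne'] at h
  have hexp : a / x + L * x - a / t - L * t - (x / t - 1) = a * (x - t) ^ 2 / (x * t ^ 2) := by
    clear_value s t
    field_simp
    linear_combination (x*(x-t)) * hquad
  have hnn : 0 ≤ a * (x - t) ^ 2 / (x * t ^ 2) := by positivity
  linarith [hlog, hexp.ge, hexp.le]

/-- Monotonicity of `a ↦ (1+√(1+4La))/(2L)`. -/
lemma phi_mono (L a b : ℝ) (hL : 0 < L) (hab : a ≤ b) :
    (1 + Real.sqrt (1 + 4 * L * a)) / (2 * L) ≤
      (1 + Real.sqrt (1 + 4 * L * b)) / (2 * L) := by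
  have h : Real.sqrt (1 + 4 * L * a) ≤ Real.sqrt (1 + 4 * L * b) :=
    Real.sqrt_le_sqrt (by nlinarith)
  gcongr

theorem stmt15 (m q : ℕ) (hq : 1 ≤ q) (hqm : q ≤ m) (L : ℝ) (hL : 0 < L)
    (α : ℕ → ℝ) (hα : ∀ i ∈ Finset.Icc 1 m, 0 ≤ α i)
    (hord : ∀ i, 1 ≤ i → i + 1 ≤ q → α i ≤ α (i + 1))
    (htail : ∀ j, q < j → j ≤ m → α q ≤ α j) :
    Feas q m (fun i => (1 + Real.sqrt (1 + 4 * L * α i)) / (2 * L)) ∧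
    ∀ φ : ℕ → ℝ, Feas q m φ →
      Hobj m L α (fun i => (1 + Real.sqrt (1 + 4 * L * α i)) / (2 * L)) ≤ Hobj m L α φ := by
  constructor
  · refine ⟨fun i _ => ?_, fun i hi hiq => phi_mono L _ _ hL (hord i hi hiq),
      fun j hqj hjm => phi_mono L _ _ hL (htail j hqj hjm)⟩
    have := Real.sqrt_nonneg (1 + 4 * L * α i)
    exact div_pos (by linarith) (by linarith)
  · intro φ hφ
    unfold Hobj
    refine Finset.sum_le_sum fun i hi => ?_
    exact key_pointwise L (α i) (φ i) hL (hα i hi) (hφ.1 i hi)
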